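/- Let the columns C_1, C_2, ... be i.i.d. uniform on F_2^k, fix a nonzero r ∈ F_2^k, and let T_n = t_rP(C_1,...,C_n) be the maximum number of copies of r servable from the first n columns. Then T_n / n → 1/2 almost surely as n → ∞. -/

import Mathlib

open MeasureTheory ProbabilityTheory Filter
open scoped ENNReal

/-- A request sequence `R` can be served from the multiset of columns `G` by
pairwise disjoint recovery sets (disjointness encoded by `∑ i, S i ≤ G`). -/
def Serves {k : ℕ} (G : Multiset (Fin k → ZMod 2)) {t : ℕ}
    (R : Fin t → (Fin k → ZMod 2)) : Prop :=
  ∃ S : Fin t → Multiset (Fin k → ZMod 2), (∑ i, S i) ≤ G ∧ ∀ i, (S i).sum = R i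

/-- `t_rP`: maximum number of copies of the request `r` servable from `G`. -/
noncomputable def tRP {k : ℕ} (G : Multiset (Fin k → ZMod 2)) (r : Fin k → ZMod 2) : ℕ :=
  sSup {t : ℕ | Serves G (fun _ : Fin t => r)}

open scoped Topology

namespace TRPaux

variable {k : ℕ}

lemma addself (v : Fin k → ZMod 2) : v + v = 0 := by
  funext i
  have h : ∀ x : ZMod 2, x + x = 0 := by decide
  exact h (v i)

lemma add_add_cancel (v r : Fin k → ZMod 2) : v + r + r = v := by
  rw [add_assoc, addself, add_zero]

lemma card_multiset_sum {ι α : Type*} (s : Finset ι) (f : ι → Multiset α) :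
    Multiset.card (∑ i ∈ s, f i) = ∑ i ∈ s, Multiset.card (f i) := by
  classical
  induction s using Finset.cons_induction with
  | empty => simp
  | cons a s ha ih => simp [Finset.sum_cons, ih]

lemma sum_multiset_sum {ι α : Type*} [AddCommMonoid α] (s : Finset ι) (f : ι → Multiset α) :
    (∑ i ∈ s, f i).sum = ∑ i ∈ s, (f i).sum := by
  classical
  induction s using Finset.cons_induction with
  | empty => simp
  | cons a s ha ih => simp [Finset.sum_cons, Finset.sum_insert ha, ih, Multiset.sum_add]

lemma zero_mem_servSet (G : Multiset (Fin k → ZMod 2)) (r : Fin k → ZMod 2) :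
    0 ∈ {t : ℕ | Serves G (fun _ : Fin t => r)} := by
  refine ⟨fun i => i.elim0, by simp, fun i => i.elim0⟩

lemma serves_le_card {G : Multiset (Fin k → ZMod 2)} {r : Fin k → ZMod 2} (hr : r ≠ 0)
    {t : ℕ} (h : Serves G (fun _ : Fin t => r)) : t ≤ Multiset.card G := by
  obtain ⟨S, hle, hsum⟩ := h
  have h1 : ∀ i, 1 ≤ Multiset.card (S i) := by
    intro i
    rcases eq_or_ne (S i) 0 with h0 | h0
    · exfalso
      apply hr
      have := hsum i
      rw [h0, Multiset.sum_zero] at this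
      exact this.symm
    · exact Multiset.card_pos.mpr h0
  calc t = ∑ _i : Fin t, 1 := by simp
    _ ≤ ∑ i : Fin t, Multiset.card (S i) := Finset.sum_le_sum fun i _ => h1 i
    _ = Multiset.card (∑ i, S i) := (card_multiset_sum _ _).symm
    _ ≤ Multiset.card G := Multiset.card_le_card hle

lemma bddAbove_servSet {G : Multiset (Fin k → ZMod 2)} {r : Fin k → ZMod 2} (hr : r ≠ 0) :
    BddAbove {t : ℕ | Serves G (fun _ : Fin t => r)} :=
  ⟨Multiset.card G, fun _t ht => serves_le_card hr ht⟩

lemma tRP_mem {G : Multiset (Fin k → ZMod 2)} {r : Fin k → ZMod 2} (hr : r ≠ 0) :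
    Serves G (fun _ : Fin (tRP G r) => r) :=
  Nat.sSup_mem ⟨0, zero_mem_servSet G r⟩ (bddAbove_servSet hr)

lemma serves_upper {G : Multiset (Fin k → ZMod 2)} {r : Fin k → ZMod 2} (hr : r ≠ 0)
    {t : ℕ} (h : Serves G (fun _ : Fin t => r)) :
    2 * t + G.count 0 ≤ Multiset.card G + G.count r := by
  classical
  obtain ⟨S, hle, hsum⟩ := h
  set T : Fin t → Multiset (Fin k → ZMod 2) := fun i => (S i).filter (fun x => x ≠ 0) with hT
  have hTsum : ∀ i, (T i).sum = r := by
    intro i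
    have hsplit := Multiset.filter_add_not (fun x => x ≠ 0) (S i)
    have h0 : ((S i).filter (fun x => ¬ x ≠ 0)).sum = 0 := by
      apply Multiset.sum_eq_zero
      intro x hx
      have := Multiset.of_mem_filter hx
      simpa using this
    have : (T i).sum + ((S i).filter (fun x => ¬ x ≠ 0)).sum = r := by
      rw [← Multiset.sum_add, hsplit]; exact hsum i
    rwa [h0, add_zero] at this
  have key : ∀ i, 2 ≤ Multiset.card (T i) + (S i).count r := by
    intro i
    have hT1 : 1 ≤ Multiset.card (T i) := by
      apply Multiset.card_pos.mpr
      intro h0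
      apply hr
      have := hTsum i
      rw [h0, Multiset.sum_zero] at this
      exact this.symm
    rcases Nat.lt_or_ge 1 (Multiset.card (T i)) with h2 | h2
    · omega
    · have hc1 : Multiset.card (T i) = 1 := le_antisymm h2 hT1
      obtain ⟨x, hx⟩ := Multiset.card_eq_one.mp hc1
      have hxr : x = r := by
        have := hTsum i
        rwa [hx, Multiset.sum_singleton] at this
      have hrmem : r ∈ S i := by
        have : r ∈ T i := by rw [hx, hxr]; exact Multiset.mem_singleton_self r
        exact Multiset.mem_of_mem_filter this
      have : 1 ≤ (S i).count r := Multiset.one_le_count_iff_mem.mpr hrmem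
      omega
  have sum1 : ∑ i : Fin t, Multiset.card (T i) ≤ Multiset.card (G.filter (fun x => x ≠ 0)) := by
    have hTle : ∑ i : Fin t, T i ≤ G.filter (fun x => x ≠ 0) := by
      have hfil : ∑ i : Fin t, T i = (∑ i, S i).filter (fun x => x ≠ 0) := by
        rw [hT]
        induction (Finset.univ : Finset (Fin t)) using Finset.cons_induction with
        | empty => simp
        | cons a s ha ih => simp [Finset.sum_cons, Finset.sum_insert ha, ih, Multiset.filter_add]
      rw [hfil]
      exact Multiset.filter_le_filter _ hle
    calc ∑ i : Fin t, Multiset.card (T i) = Multiset.card (∑ i, T i) := (card_multiset_sum _ _).symm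
      _ ≤ _ := Multiset.card_le_card hTle
  have sum2 : ∑ i : Fin t, (S i).count r ≤ G.count r := by
    rw [← Multiset.count_sum']
    exact Multiset.count_le_of_le _ hle
  have hG : Multiset.card (G.filter (fun x => x ≠ 0)) + G.count 0 = Multiset.card G := by
    have hsplit := Multiset.filter_add_not (fun x => x ≠ 0) G
    have h0 : G.count 0 = Multiset.card (G.filter (fun x => ¬ x ≠ 0)) := by
      rw [Multiset.count_eq_card_filter_eq]
      congr 1
      apply Multiset.filter_congr
      intro x _
      constructor
      · intro h; simp [h.symm]
      · intro h; simpa [eq_comm] using h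
    rw [h0, ← Multiset.card_add, hsplit]
  have main : 2 * t ≤ Multiset.card (G.filter (fun x => x ≠ 0)) + G.count r := by
    calc 2 * t = ∑ _i : Fin t, 2 := by simp [mul_comm]
      _ ≤ ∑ i : Fin t, (Multiset.card (T i) + (S i).count r) := Finset.sum_le_sum fun i _ => key i
      _ = (∑ i : Fin t, Multiset.card (T i)) + ∑ i : Fin t, (S i).count r :=
          Finset.sum_add_distrib
      _ ≤ _ := add_le_add sum1 sum2
  omega
end TRPaux

noncomputable def eord (k : ℕ) : (Fin k → ZMod 2) ≃ Fin (Fintype.card (Fin k → ZMod 2)) :=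
  Fintype.equivFin _

noncomputable def RepF (k : ℕ) (r : Fin k → ZMod 2) : Finset (Fin k → ZMod 2) :=
  Finset.univ.filter (fun v => v ≠ 0 ∧ v ≠ r ∧ eord k v < eord k (v + r))

namespace TRPaux

lemma addr_cancel {r v w : Fin k → ZMod 2} (h : v + r = w + r) : v = w := by
  have := congrArg (· + r) h
  simpa [add_add_cancel] using this

lemma addr_eq_zero {r v : Fin k → ZMod 2} (h : v + r = 0) : v = r := by
  have : v + r + r = 0 + r := by rw [h]
  rwa [add_add_cancel, zero_add] at this

lemma addr_eq_r {r v : Fin k → ZMod 2} (h : v + r = r) : v = 0 := by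
  have : v + r + r = r + r := by rw [h]
  rwa [add_add_cancel, addself] at this

lemma mem_RepF {r v : Fin k → ZMod 2} :
    v ∈ RepF k r ↔ v ≠ 0 ∧ v ≠ r ∧ eord k v < eord k (v + r) := by
  simp [RepF]

lemma rep_asymm {r v : Fin k → ZMod 2} (hv : v ∈ RepF k r) : v + r ∉ RepF k r := by
  intro h
  have h1 := (mem_RepF.mp hv).2.2
  have h2 := (mem_RepF.mp h).2.2
  rw [add_add_cancel] at h2
  exact absurd h1 (not_lt.mpr h2.le)

lemma card_RepF {r : Fin k → ZMod 2} (hr : r ≠ 0) :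
    2 * (RepF k r).card + 2 = 2 ^ k := by
  classical
  have hinj : Function.Injective (fun v : Fin k → ZMod 2 => v + r) :=
    fun a b h => addr_cancel h
  have hdisj : Disjoint (RepF k r) ((RepF k r).image (fun v => v + r)) := by
    rw [Finset.disjoint_right]
    intro w hw hw'
    obtain ⟨v, hv, hvw⟩ := Finset.mem_image.mp hw
    exact rep_asymm hv (hvw ▸ hw')
  have hunion : RepF k r ∪ (RepF k r).image (fun v => v + r)
      = Finset.univ.filter (fun v => v ≠ 0 ∧ v ≠ r) := by
    ext w
    simp only [Finset.mem_union, Finset.mem_image, Finset.mem_filter, Finset.mem_univ, true_and]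
    constructor
    · rintro (hw | ⟨v, hv, rfl⟩)
      · exact ⟨(mem_RepF.mp hw).1, (mem_RepF.mp hw).2.1⟩
      · obtain ⟨h0, hvr, _⟩ := mem_RepF.mp hv
        exact ⟨fun h => hvr (addr_eq_zero h), fun h => h0 (addr_eq_r h)⟩
    · rintro ⟨h0, hwr⟩
      rcases lt_trichotomy (eord k w) (eord k (w + r)) with hlt | heq | hgt
      · exact Or.inl (mem_RepF.mpr ⟨h0, hwr, hlt⟩)
      · exfalso
        have hww : w = w + r := (eord k).injective (Fin.ext (by rw [heq]))
        have : w + r = w + 0 := by rw [← hww, add_zero]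
        exact hr (add_left_cancel this)
      · refine Or.inr ⟨w + r, mem_RepF.mpr ⟨?_, ?_, ?_⟩, add_add_cancel w r⟩
        · intro h; exact hwr (addr_eq_zero h)
        · intro h; exact h0 (addr_eq_r h)
        · rwa [add_add_cancel]
  have hcardu : (Finset.univ.filter (fun v : Fin k → ZMod 2 => v ≠ 0 ∧ v ≠ r)).card + 2 = 2 ^ k := by
    have heq : Finset.univ.filter (fun v : Fin k → ZMod 2 => v ≠ 0 ∧ v ≠ r)
        = Finset.univ \ {0, r} := by
      ext w; simp [and_comm]
    rw [heq, Finset.card_sdiff_of_subset (by simp)]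
    have hc2 : ({0, r} : Finset (Fin k → ZMod 2)).card = 2 := by
      rw [Finset.card_insert_of_notMem (by simpa using (Ne.symm hr)), Finset.card_singleton]
    have hcu : (Finset.univ : Finset (Fin k → ZMod 2)).card = 2 ^ k := by
      simp [Finset.card_univ]
    rw [hc2, hcu]
    have h2 : 2 ≤ 2 ^ k := by
      rcases Nat.eq_zero_or_pos k with h | h
      · exfalso; apply hr; subst h; exact Subsingleton.elim r 0
      · calc 2 = 2 ^ 1 := rfl
          _ ≤ 2 ^ k := Nat.pow_le_pow_right (by norm_num) h
    omega
  have hcard : (RepF k r).card + (RepF k r).card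
      = (Finset.univ.filter (fun v : Fin k → ZMod 2 => v ≠ 0 ∧ v ≠ r)).card := by
    rw [← hunion, Finset.card_union_of_disjoint hdisj,
      Finset.card_image_of_injective _ hinj]
  omega

end TRPaux

namespace TRPaux

lemma serves_of_multiset {G : Multiset (Fin k → ZMod 2)} {r : Fin k → ZMod 2} {t : ℕ}
    (M : Multiset (Multiset (Fin k → ZMod 2))) (hcard : Multiset.card M = t)
    (hle : M.sum ≤ G) (hmem : ∀ s ∈ M, Multiset.sum s = r) :
    Serves G (fun _ : Fin t => r) := by
  subst hcard
  induction M using Quotient.inductionOn with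
  | h l =>
    refine ⟨fun i => l.get i, ?_, fun i => ?_⟩
    · have : ∑ i : Fin l.length, l.get i = l.sum := by
        rw [← List.sum_ofFn, List.ofFn_get]
      exact le_of_le_of_eq (le_of_eq this) rfl |>.trans (le_of_eq rfl) |>.trans
        (by simpa using hle)
    · exact hmem _ (by simp [List.get_mem]; exact List.get_mem _ _)

lemma serves_lower {G : Multiset (Fin k → ZMod 2)} {r : Fin k → ZMod 2} (hr : r ≠ 0) :
    Serves G (fun _ : Fin (G.count r + ∑ v ∈ RepF k r, min (G.count v) (G.count (v + r))) => r) := by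
  classical
  set m : (Fin k → ZMod 2) → ℕ := fun v => min (G.count v) (G.count (v + r)) with hm
  set M : Multiset (Multiset (Fin k → ZMod 2)) :=
    Multiset.replicate (G.count r) {r} +
      ∑ v ∈ RepF k r, Multiset.replicate (m v) {v, v + r} with hM
  apply serves_of_multiset M
  · rw [hM, Multiset.card_add, Multiset.card_replicate, card_multiset_sum]
    congr 1
    exact Finset.sum_congr rfl fun v _ => Multiset.card_replicate _ _
  · -- M.sum ≤ G
    have hsum : M.sum = Multiset.replicate (G.count r) r +
        ∑ v ∈ RepF k r, (Multiset.replicate (m v) v + Multiset.replicate (m v) (v + r)) := by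
      rw [hM, Multiset.sum_add, sum_multiset_sum]
      congr 1
      · rw [Multiset.sum_replicate, Multiset.nsmul_singleton]
      · refine Finset.sum_congr rfl fun v _ => ?_
        rw [Multiset.sum_replicate]
        have : ({v, v + r} : Multiset (Fin k → ZMod 2)) = {v} + {v + r} := by
          rw [Multiset.singleton_add]; rfl
        rw [this, smul_add, Multiset.nsmul_singleton, Multiset.nsmul_singleton]
    rw [hsum, Multiset.le_iff_count]
    intro w
    rw [Multiset.count_add, Multiset.count_replicate, Multiset.count_sum']
    simp only [Multiset.count_add, Multiset.count_replicate]
    by_cases hwr : w = r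
    · have hz : ∀ v ∈ RepF k r,
          ((if v = w then m v else 0) + (if v + r = w then m v else 0)) = 0 := by
        intro v hv
        obtain ⟨h0, hvr, -⟩ := mem_RepF.mp hv
        rw [if_neg (fun h => hvr (h.trans hwr)), if_neg (fun h => h0 (addr_eq_r (h.trans hwr))),
          add_zero]
      rw [Finset.sum_congr rfl hz, Finset.sum_const, smul_zero, add_zero, if_pos hwr.symm, hwr]
    · rw [if_neg (fun h => hwr h.symm), zero_add]
      by_cases hw2 : w ∈ RepF k r
      · have hsingle : ∀ v ∈ RepF k r, v ≠ w →
            ((if v = w then m v else 0) + (if v + r = w then m v else 0)) = 0 := by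
          intro v hv hne
          rw [if_neg hne, if_neg (fun h => rep_asymm hv (by rwa [h])), add_zero]
        rw [Finset.sum_eq_single_of_mem w hw2 hsingle, if_pos rfl,
          if_neg (fun h => hr (add_left_cancel (a := w) (h.trans (add_zero w).symm))), add_zero]
        exact min_le_left _ _
      · by_cases hw3 : w + r ∈ RepF k r
        · have hsingle : ∀ v ∈ RepF k r, v ≠ w + r →
              ((if v = w then m v else 0) + (if v + r = w then m v else 0)) = 0 := by
            intro v hv hne
            rw [if_neg (fun (h : v = w) => hw2 (h ▸ hv)),
              if_neg (fun (h : v + r = w) => hne (by rw [← h, add_add_cancel])), add_zero]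
          rw [Finset.sum_eq_single_of_mem (w + r) hw3 hsingle,
            if_neg (fun (h : w + r = w) => hw2 (h ▸ hw3)), if_pos (add_add_cancel w r), zero_add]
          have hmle : m (w + r) ≤ Multiset.count (w + r + r) G := min_le_right _ _
          rwa [add_add_cancel] at hmle
        · have hz : ∀ v ∈ RepF k r,
              ((if v = w then m v else 0) + (if v + r = w then m v else 0)) = 0 := by
            intro v hv
            rw [if_neg (fun (h : v = w) => hw2 (h ▸ hv)),
              if_neg (fun (h : v + r = w) => hw3 (by rw [← h, add_add_cancel]; exact hv)), add_zero]
          rw [Finset.sum_congr rfl hz, Finset.sum_const, smul_zero]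
          exact Nat.zero_le _
  · -- all members sum to r
    intro s hs
    rw [hM, Multiset.mem_add] at hs
    rcases hs with hs | hs
    · rw [Multiset.eq_of_mem_replicate hs, Multiset.sum_singleton]
    · obtain ⟨v, hv, hsv⟩ := Multiset.mem_sum.mp hs
      rw [Multiset.eq_of_mem_replicate hsv]
      show (v ::ₘ {v + r}).sum = r
      rw [Multiset.sum_cons, Multiset.sum_singleton, ← add_assoc, addself, zero_add]

lemma tRP_lower {G : Multiset (Fin k → ZMod 2)} {r : Fin k → ZMod 2} (hr : r ≠ 0) :
    G.count r + ∑ v ∈ RepF k r, min (G.count v) (G.count (v + r)) ≤ tRP G r :=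
  le_csSup (bddAbove_servSet hr) (serves_lower hr)

lemma tRP_upper {G : Multiset (Fin k → ZMod 2)} {r : Fin k → ZMod 2} (hr : r ≠ 0) :
    2 * tRP G r + G.count 0 ≤ Multiset.card G + G.count r :=
  serves_upper hr (tRP_mem hr)

end TRPaux

namespace TRPaux

lemma count_ofFn {n : ℕ} (f : Fin n → (Fin k → ZMod 2)) (v : Fin k → ZMod 2) :
    Multiset.count v ((List.ofFn f : List (Fin k → ZMod 2)) : Multiset (Fin k → ZMod 2))
      = ∑ i : Fin n, if f i = v then 1 else 0 := by
  induction n with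
  | zero => simp
  | succ n ih =>
    rw [List.ofFn_succ, ← Multiset.cons_coe, Multiset.count_cons, ih, Fin.sum_univ_succ]
    rw [add_comm]
    congr 1
    simp [eq_comm]

end TRPaux

/-- if the columns `C 0, C 1, …` are i.i.d. uniform on `F_2^k` and
`r ≠ 0` is fixed, then `T_n/n → 1/2` almost surely, where `T_n` is the maximum
number of copies of `r` servable from the first `n` columns. -/
theorem tRP_div_n_tendsto_one_half (k : ℕ) (r : Fin k → ZMod 2) (hr : r ≠ 0)
    {Ω : Type*} [MeasureSpace Ω] [IsProbabilityMeasure (ℙ : Measure Ω)]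
    (C : ℕ → Ω → (Fin k → ZMod 2))
    (hmeas : ∀ i, Measurable (C i))
    (hindep : iIndepFun C ℙ)
    (hunif : ∀ i (v : Fin k → ZMod 2), ℙ {ω | C i ω = v} = ((2 : ℝ≥0∞) ^ k)⁻¹) :
    ∀ᵐ ω ∂ℙ, Tendsto
      (fun n : ℕ =>
        (tRP ((List.ofFn fun i : Fin n => C (i : ℕ) ω : List (Fin k → ZMod 2)) :
            Multiset (Fin k → ZMod 2)) r : ℝ) / n)
      atTop (nhds (1 / 2)) := by
  classical
  have hk : 0 < k := by
    rcases Nat.eq_zero_or_pos k with h | h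
    · exfalso; apply hr; subst h; exact Subsingleton.elim r 0
    · exact h
  set p : ℝ := ((2 : ℝ) ^ k)⁻¹ with hp
  have hcount : ∀ᵐ ω ∂ℙ, ∀ v : Fin k → ZMod 2,
      Tendsto (fun n : ℕ => ((Multiset.count v
        ((List.ofFn fun i : Fin n => C (i : ℕ) ω : List (Fin k → ZMod 2)) :
          Multiset (Fin k → ZMod 2))) : ℝ) / n) atTop (𝓝 p) := by
    rw [ae_all_iff]
    intro v
    set f : (Fin k → ZMod 2) → ℝ := ({v} : Set (Fin k → ZMod 2)).indicator (fun _ => 1) with hf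
    have hfmeas : Measurable f := measurable_const.indicator (measurableSet_singleton v)
    set X : ℕ → Ω → ℝ := fun i => f ∘ C i with hX
    have hX0 : X 0 = ((C 0) ⁻¹' {v}).indicator (fun _ => (1 : ℝ)) := by
      funext ω
      simp [hX, hf, Set.indicator_apply, Pi.single_apply]
    have hint : Integrable (X 0) ℙ := by
      rw [hX0]
      exact (integrable_const 1).indicator (hmeas 0 (measurableSet_singleton v))
    have hindep' : Pairwise (Function.onFun (IndepFun · · ℙ) X) := fun i j hij =>
      (hindep.indepFun hij).comp hfmeas hfmeas
    have hident : ∀ i, IdentDistrib (X i) (X 0) ℙ ℙ := by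
      intro i
      have hmap : Measure.map (C i) ℙ = Measure.map (C 0) ℙ := by
        apply Measure.ext_iff_singleton.mpr
        intro a
        rw [Measure.map_apply (hmeas i) (measurableSet_singleton a),
          Measure.map_apply (hmeas 0) (measurableSet_singleton a)]
        have h1 : (C i) ⁻¹' {a} = {ω | C i ω = a} := rfl
        have h2 : (C 0) ⁻¹' {a} = {ω | C 0 ω = a} := rfl
        rw [h1, h2, hunif i a, hunif 0 a]
      exact IdentDistrib.comp ⟨(hmeas i).aemeasurable, (hmeas 0).aemeasurable, hmap⟩ hfmeas
    have hexp : 𝔼[X 0] = p := by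
      rw [hX0]
      show ∫ a, ((C 0) ⁻¹' {v}).indicator 1 a ∂ℙ = p
      rw [integral_indicator_one (hmeas 0 (measurableSet_singleton v))]
      have hpre : (C 0) ⁻¹' {v} = {ω | C 0 ω = v} := rfl
      rw [hpre, measureReal_def, hunif 0 v, hp]
      simp [ENNReal.toReal_inv, ENNReal.toReal_pow]
    have hsl := strong_law_ae_real X hint hindep' hident
    rw [hexp] at hsl
    filter_upwards [hsl] with ω hω
    refine hω.congr fun n => ?_
    congr 1
    rw [TRPaux.count_ofFn]
    push_cast [apply_ite (Nat.cast : ℕ → ℝ)]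
    rw [← Fin.sum_univ_eq_sum_range (fun i => X i ω) n]
    refine Finset.sum_congr rfl fun i _ => ?_
    rw [hX]
    simp [hf, Set.indicator_apply, Pi.single_apply]
  filter_upwards [hcount] with ω hω
  set G : ℕ → Multiset (Fin k → ZMod 2) := fun n =>
    ((List.ofFn fun i : Fin n => C (i : ℕ) ω : List (Fin k → ZMod 2)) :
      Multiset (Fin k → ZMod 2)) with hG
  set c : ℕ → (Fin k → ZMod 2) → ℕ := fun n v => Multiset.count v (G n) with hc
  have hcard : ∀ n, Multiset.card (G n) = n := by intro n; simp [hG]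
  have hub : ∀ n, 2 * tRP (G n) r + c n 0 ≤ n + c n r := by
    intro n
    have := TRPaux.tRP_upper (G := G n) hr
    rwa [hcard n] at this
  have hlb : ∀ n, c n r + ∑ v ∈ RepF k r, min (c n v) (c n (v + r)) ≤ tRP (G n) r :=
    fun n => TRPaux.tRP_lower hr
  -- limits for the bounding sequences
  have hcR : Tendsto (fun n => (c n r : ℝ) / n) atTop (𝓝 p) := hω r
  have hc0 : Tendsto (fun n => (c n 0 : ℝ) / n) atTop (𝓝 p) := hω 0
  have hcardR : ((2 : ℝ) ^ k) = 2 * (RepF k r).card + 2 := by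
    have h := TRPaux.card_RepF (r := r) hr
    have h2 := congrArg (fun x : ℕ => (x : ℝ)) h
    push_cast at h2
    linarith
  have hglim : Tendsto (fun n => (c n r : ℝ) / n +
      ∑ v ∈ RepF k r, min ((c n v : ℝ) / n) ((c n (v + r) : ℝ) / n)) atTop (𝓝 (1 / 2)) := by
    have h1 : Tendsto (fun n => (c n r : ℝ) / n +
        ∑ v ∈ RepF k r, min ((c n v : ℝ) / n) ((c n (v + r) : ℝ) / n)) atTop
        (𝓝 (p + ∑ _v ∈ RepF k r, min p p)) :=
      hcR.add (tendsto_finset_sum _ fun v _ => (hω v).min (hω (v + r)))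
    have h2 : p + ∑ _v ∈ RepF k r, min p p = 1 / 2 := by
      rw [min_self, Finset.sum_const, nsmul_eq_mul]
      have hne : ((RepF k r).card : ℝ) + 1 ≠ 0 := by positivity
      have hpval : p = ((2 : ℝ) ^ k)⁻¹ := hp
      rw [hpval, hcardR]
      field_simp
      ring
    rwa [h2] at h1
  have hhlim : Tendsto (fun n : ℕ => (((n : ℝ) + (c n r : ℝ) - (c n 0 : ℝ)) / 2) / n) atTop
      (𝓝 (1 / 2)) := by
    have h1 : Tendsto (fun n : ℕ => (1 + (c n r : ℝ) / n - (c n 0 : ℝ) / n) / 2) atTop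
        (𝓝 ((1 + p - p) / 2)) := ((tendsto_const_nhds.add hcR).sub hc0).div_const 2
    have h2 : (1 + p - p) / 2 = 1 / 2 := by ring
    rw [h2] at h1
    apply h1.congr'
    filter_upwards [eventually_ge_atTop 1] with n hn
    have hn' : (n : ℝ) ≠ 0 := by positivity
    have h4 : ((n : ℝ) + (c n r : ℝ) - (c n 0 : ℝ)) / n
        = 1 + (c n r : ℝ) / n - (c n 0 : ℝ) / n := by
      rw [sub_div, add_div, div_self hn']
    show (1 + (c n r : ℝ) / n - (c n 0 : ℝ) / n) / 2
        = ((n : ℝ) + (c n r : ℝ) - (c n 0 : ℝ)) / 2 / n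
    rw [← h4, div_div, div_div, mul_comm]
  refine tendsto_of_tendsto_of_tendsto_of_le_of_le' hglim hhlim ?_ ?_
  · filter_upwards [eventually_ge_atTop 1] with n hn
    have hn' : (0 : ℝ) < n := by positivity
    have hcast : ((c n r + ∑ v ∈ RepF k r, min (c n v) (c n (v + r)) : ℕ) : ℝ)
        ≤ (tRP (G n) r : ℝ) := by exact_mod_cast hlb n
    have hsplit : ((c n r + ∑ v ∈ RepF k r, min (c n v) (c n (v + r)) : ℕ) : ℝ) / n
        = (c n r : ℝ) / n + ∑ v ∈ RepF k r, min ((c n v : ℝ) / n) ((c n (v + r) : ℝ) / n) := by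
      push_cast [Nat.cast_min]
      rw [add_div, Finset.sum_div]
      congr 1
      refine Finset.sum_congr rfl fun v _ => ?_
      exact (min_div_div_right hn'.le _ _).symm
    rw [← hsplit]
    gcongr
  · filter_upwards [eventually_ge_atTop 1] with n hn
    have hn' : (0 : ℝ) < n := by positivity
    have hcast : 2 * (tRP (G n) r : ℝ) + (c n 0 : ℝ) ≤ (n : ℝ) + (c n r : ℝ) := by
      exact_mod_cast hub n
    have : (tRP (G n) r : ℝ) ≤ ((n : ℝ) + (c n r : ℝ) - (c n 0 : ℝ)) / 2 := by linarith
    gcongr
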